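/- The shifts of the Haar wavelet function form an orthonormal system: for all a, b ∈ I_2, ∫_{ℚ_2} ψ⁰(x − a) · conj(ψ⁰(x − b)) dμ(x) equals 1 if a = b and equals 0 if a ≠ b. -/

import Mathlib

open MeasureTheory

/-- The refinable function: the indicator of `ℤ_2` inside `ℚ_[2]`. -/
noncomputable def phi2 : ℚ_[2] → ℂ :=
  Set.indicator {x : ℚ_[2] | ‖x‖ ≤ 1} 1

/-- The 2-adic Haar wavelet function `ψ⁰(x) = φ(x/2) − φ(x/2 − 1/2)`. -/
noncomputable def psi0 : ℚ_[2] → ℂ :=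
  fun x => phi2 (x / 2) - phi2 (x / 2 - 1 / 2)

/-- The set `I_2` of fractional-part representatives of `ℚ_2/ℤ_2`. -/
def I2 : Set ℚ_[2] :=
  {a | ∃ γ m : ℕ, m < 2 ^ γ ∧ a = (m : ℚ_[2]) / (2 : ℚ_[2]) ^ γ}

lemma norm_two2 : ‖(2 : ℚ_[2])‖ = 1/2 := by
  rw [show (2:ℚ_[2]) = ((2:ℕ):ℚ_[2]) by norm_cast, Padic.norm_p]; norm_num

lemma norm_div_two (x : ℚ_[2]) : ‖x / 2‖ = 2 * ‖x‖ := by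
  rw [norm_div, norm_two2]; ring

lemma norm_sub_of_lt {x y : ℚ_[2]} (h : ‖y‖ < ‖x‖) : ‖x - y‖ = ‖x‖ := by
  rw [sub_eq_add_neg, Padic.add_eq_max_of_ne (by rw [norm_neg]; exact (ne_of_lt h).symm)]
  rw [norm_neg]; exact max_eq_left h.le

lemma norm_le_half_of_lt_one {x : ℚ_[2]} (h : ‖x‖ < 1) : ‖x‖ ≤ 1/2 := by
  have := (Padic.norm_lt_pow_iff_norm_le_pow_sub_one x 0).1 (by simpa using h)
  norm_num at this; linarith

lemma phi2_of {x : ℚ_[2]} (h : ‖x‖ ≤ 1) : phi2 x = 1 :=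
  Set.indicator_of_mem h 1

lemma phi2_of_not {x : ℚ_[2]} (h : ¬ ‖x‖ ≤ 1) : phi2 x = 0 :=
  Set.indicator_of_notMem h 1

lemma psi0_pos {x : ℚ_[2]} (h : ‖x‖ ≤ 1/2) : psi0 x = 1 := by
  have h1 : ‖x - 1‖ = 1 := by
    have := norm_sub_of_lt (x := (1:ℚ_[2])) (y := x) (by rw [norm_one]; linarith)
    rw [← norm_neg, neg_sub] at this; rw [this, norm_one]
  have hx2 : x / 2 - 1 / 2 = (x - 1) / 2 := by ring
  rw [psi0, phi2_of (by rw [norm_div_two]; linarith), hx2,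
    phi2_of_not (by rw [norm_div_two, h1]; norm_num), sub_zero]

lemma psi0_neg {x : ℚ_[2]} (h : ‖x - 1‖ ≤ 1/2) : psi0 x = -1 := by
  have h1 : ‖x‖ = 1 := by
    have := norm_sub_of_lt (x := (1:ℚ_[2])) (y := 1 - x) (by rw [norm_one, ← norm_neg, neg_sub]; linarith)
    rw [sub_sub_cancel, norm_one] at this; exact this
  have hx2 : x / 2 - 1 / 2 = (x - 1) / 2 := by ring
  rw [psi0, phi2_of_not (by rw [norm_div_two, h1]; norm_num), hx2,
    phi2_of (by rw [norm_div_two]; linarith), zero_sub]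

lemma psi0_zero {x : ℚ_[2]} (h : ¬ ‖x‖ ≤ 1) : psi0 x = 0 := by
  push_neg at h
  have h1 : ‖x - 1‖ = ‖x‖ := norm_sub_of_lt (by rw [norm_one]; exact h)
  have hx2 : x / 2 - 1 / 2 = (x - 1) / 2 := by ring
  rw [psi0, phi2_of_not (by rw [norm_div_two]; linarith), hx2,
    phi2_of_not (by rw [norm_div_two, h1]; linarith), sub_zero]

lemma partition {x : ℚ_[2]} (h : ‖x‖ ≤ 1) : ‖x‖ ≤ 1/2 ∨ ‖x - 1‖ ≤ 1/2 := by
  set z : ℤ_[2] := ⟨x, h⟩ with hz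
  have h0 : ∀ w : ℤ_[2], PadicInt.toZMod w = 0 ↔ ‖w‖ < 1 := fun w => by
    rw [← RingHom.mem_ker, PadicInt.ker_toZMod, IsLocalRing.mem_maximalIdeal,
      PadicInt.mem_nonunits]
  rcases (by decide : ∀ c : ZMod 2, c = 0 ∨ c = 1) (PadicInt.toZMod z) with hc | hc
  · left
    exact norm_le_half_of_lt_one ((h0 z).1 hc)
  · right
    have : ‖z - 1‖ < 1 := (h0 _).1 (by rw [map_sub, hc, map_one, sub_self])
    have hcoe : ((z - 1 : ℤ_[2]) : ℚ_[2]) = x - 1 := by rw [PadicInt.coe_sub z 1, PadicInt.coe_one]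
    rw [PadicInt.norm_def, hcoe] at this
    exact norm_le_half_of_lt_one this
lemma psi0_mul_conj (x : ℚ_[2]) :
    psi0 x * (starRingEnd ℂ) (psi0 x)
      = Set.indicator {y : ℚ_[2] | ‖y‖ ≤ 1} (fun _ => (1:ℂ)) x := by
  by_cases h : ‖x‖ ≤ 1
  · have hmem : x ∈ {y : ℚ_[2] | ‖y‖ ≤ 1} := h
    rw [Set.indicator_of_mem hmem]
    rcases partition h with h2 | h2
    · rw [psi0_pos h2]; simp
    · rw [psi0_neg h2]; simp
  · have hmem : x ∉ {y : ℚ_[2] | ‖y‖ ≤ 1} := h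
    rw [Set.indicator_of_notMem hmem, psi0_zero h]; simp

lemma sep_aux {γ δ m n : ℕ} (hm : m < 2^γ) (hn : n < 2^δ) (hle : γ ≤ δ)
    (h : ‖(m : ℚ_[2])/(2:ℚ_[2])^γ - (n : ℚ_[2])/(2:ℚ_[2])^δ‖ ≤ 1) :
    (m : ℚ_[2])/(2:ℚ_[2])^γ = (n : ℚ_[2])/(2:ℚ_[2])^δ := by
  set M : ℕ := m * 2^(δ-γ) with hM
  have hMδ : M < 2^δ := by
    calc M < 2^γ * 2^(δ-γ) := by
            exact (Nat.mul_lt_mul_right (Nat.pow_pos two_pos)).mpr hm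
      _ = 2^δ := by rw [← pow_add, Nat.add_sub_cancel' hle]
  have h2δ : (2:ℚ_[2])^δ = 2^γ * 2^(δ-γ) := by rw [← pow_add, Nat.add_sub_cancel' hle]
  have hrew : (m:ℚ_[2])/(2:ℚ_[2])^γ = (M:ℚ_[2])/(2:ℚ_[2])^δ := by
    rw [div_eq_div_iff (pow_ne_zero _ two_ne_zero) (pow_ne_zero _ two_ne_zero), h2δ]
    push_cast [hM]; ring
  rw [hrew] at h ⊢
  have hdiff : (M:ℚ_[2])/(2:ℚ_[2])^δ - (n:ℚ_[2])/(2:ℚ_[2])^δ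
      = ((((M:ℤ) - n : ℤ)) : ℚ_[2])/(2:ℚ_[2])^δ := by push_cast; ring
  rw [hdiff, norm_div] at h
  have hnorm : ‖(2:ℚ_[2])^δ‖ = ((2:ℕ):ℝ)^(-(δ:ℤ)) := by
    rw [norm_pow, norm_two2]; push_cast
    rw [zpow_neg, zpow_natCast, one_div, inv_pow]
  have hpos : (0:ℝ) < ‖(2:ℚ_[2])^δ‖ := by
    rw [hnorm]; positivity
  have hk : ((2:ℤ)^δ) ∣ ((M:ℤ) - n) := by
    have := (div_le_one hpos).1 h
    rw [hnorm] at this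
    exact_mod_cast (Padic.norm_int_le_pow_iff_dvd ((M:ℤ) - n) δ).1 this
  have hzero : (M:ℤ) - n = 0 := by
    refine Int.eq_zero_of_abs_lt_dvd hk ?_
    have hM' : (M:ℤ) < 2^δ := by exact_mod_cast hMδ
    have hn' : (n:ℤ) < 2^δ := by exact_mod_cast hn
    rw [abs_lt]
    constructor <;> linarith [Int.natCast_nonneg M, Int.natCast_nonneg n]
  have : (M:ℚ_[2]) = (n:ℚ_[2]) := by exact_mod_cast congrArg (fun k : ℤ => ((k:ℚ_[2]))) (sub_eq_zero.1 hzero)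
  rw [this]

lemma sep {a b : ℚ_[2]} (ha : a ∈ I2) (hb : b ∈ I2) (hne : a ≠ b) : ¬ ‖a - b‖ ≤ 1 := by
  intro h
  obtain ⟨γ, m, hm, rfl⟩ := ha
  obtain ⟨δ, n, hn, rfl⟩ := hb
  rcases le_total γ δ with hle | hle
  · exact hne (sep_aux hm hn hle h)
  · exact hne (sep_aux hn hm hle (by rw [← norm_neg, neg_sub] at h; exact h)).symm

theorem wavelet_shifts_orthonormal [MeasurableSpace ℚ_[2]] [BorelSpace ℚ_[2]]
    (μ : Measure ℚ_[2]) [μ.IsAddHaarMeasure]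
    (hμ : μ {x : ℚ_[2] | ‖x‖ ≤ 1} = 1)
    (a b : ℚ_[2]) (ha : a ∈ I2) (hb : b ∈ I2) :
    (a = b → ∫ x, psi0 (x - a) * (starRingEnd ℂ) (psi0 (x - b)) ∂μ = 1) ∧
    (a ≠ b → ∫ x, psi0 (x - a) * (starRingEnd ℂ) (psi0 (x - b)) ∂μ = 0) := by
  constructor
  · rintro rfl
    have hmeas : MeasurableSet {x : ℚ_[2] | ‖x‖ ≤ 1} :=
      measurableSet_le continuous_norm.measurable measurable_const
    calc ∫ x, psi0 (x - a) * (starRingEnd ℂ) (psi0 (x - a)) ∂μ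
        = ∫ x, Set.indicator {y : ℚ_[2] | ‖y‖ ≤ 1} (fun _ => (1:ℂ)) (x - a) ∂μ := by
          simp_rw [psi0_mul_conj]
      _ = ∫ x, Set.indicator {y : ℚ_[2] | ‖y‖ ≤ 1} (fun _ => (1:ℂ)) x ∂μ :=
          integral_sub_right_eq_self _ a
      _ = (μ {x : ℚ_[2] | ‖x‖ ≤ 1}).toReal • (1:ℂ) := integral_indicator_const _ hmeas
      _ = 1 := by rw [hμ]; simp
  · intro hne
    have hzero : ∀ x : ℚ_[2], psi0 (x - a) * (starRingEnd ℂ) (psi0 (x - b)) = 0 := by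
      intro x
      by_cases h : ‖x - a‖ ≤ 1
      · have hb' : ¬ ‖x - b‖ ≤ 1 := by
          intro h2
          refine sep ha hb hne ?_
          have hab : a - b = (x - b) - (x - a) := by ring
          rw [hab, sub_eq_add_neg]
          exact le_trans (Padic.nonarchimedean _ _)
            (max_le h2 (by rwa [norm_neg]))
        rw [psi0_zero hb', map_zero, mul_zero]
      · rw [psi0_zero h, zero_mul]
    simp_rw [hzero]
    exact integral_zero _ _
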